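/- Suppose the presentation ⟨X|R⟩ is side-confluent, let φ be the normal-form map, let n ≥ 0 and m ≥ l_N(n), let k ≥ 1 satisfy ⟨F_1^{n,m},F_2^{n,m}⟩^k = ⟨F_2^{n,m},F_1^{n,m}⟩^k, and set Γ^{n,m} = (id − F_2^{n,m})·Σ_{i odd, 1 ≤ i ≤ k−1} ⟨F_2^{n,m},F_1^{n,m}⟩^i ∈ End(V^{⊗m}). If m ≥ l_N(n+1), then the image of Γ^{n,m} is contained in φ(V^{⊗m−l_N(n+1)}) ⊗ J_{n+1} (the span of w·f with w a normal word of length m−l_N(n+1) and f ∈ J_{n+1}); if m < l_N(n+1), then Γ^{n,m} = 0. -/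

import Mathlib

open scoped TensorProduct
set_option linter.unusedSectionVars false

def altProd {A : Type*} [Monoid A] (t s : A) (k : ℕ) : A :=
  if Even k then (t * s) ^ (k / 2) else s * (t * s) ^ (k / 2)

namespace CC

variable (K : Type*) [Field K] (X : Type*) [Fintype X] [LinearOrder X]

abbrev F : Type _ := MonoidAlgebra K (FreeMonoid X)

noncomputable def wd (w : FreeMonoid X) : F K X := MonoidAlgebra.of K (FreeMonoid X) w

def wlen (w : FreeMonoid X) : ℕ := (FreeMonoid.toList w).length

noncomputable instance : LinearOrder (FreeMonoid X) :=
  LinearOrder.lift' (fun w => FreeMonoid.toList w) (fun _ _ h => FreeMonoid.toList.injective h)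

noncomputable def lm (f : F K X) : FreeMonoid X := (f.coeff.support.max).unbotD 1

/-- The homogeneous component `V^{⊗m} = KX^{(m)}` of `K⟨X⟩`:
elements supported on words of length `m`. -/
noncomputable def degSub (m : ℕ) : Submodule K (F K X) where
  carrier := {f | ∀ w ∈ f.coeff.support, wlen X w = m}
  add_mem' := by
    intro a b ha hb w hw
    rcases Finset.mem_union.mp (Finsupp.support_add hw) with h | h
    · exact ha w h
    · exact hb w h
  zero_mem' := by intro w hw; simp at hw
  smul_mem' := by intro c f hf w hw; exact hf w (Finsupp.support_smul hw)

lemma mem_degSub {m : ℕ} {f : F K X} :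
    f ∈ degSub K X m ↔ ∀ w ∈ f.coeff.support, wlen X w = m := Iff.rfl

/-- `l_N(2k) = kN`, `l_N(2k+1) = kN + 1`. -/
def lN (N n : ℕ) : ℕ := if Even n then (n / 2) * N else (n / 2) * N + 1

/-- The homogeneous component `I(R)_m` of the two-sided ideal generated by `R`:
`I(R)_m = Σ_{i=0}^{m−N} V^{⊗i}·R̄·V^{⊗m−N−i}` for `m ≥ N` and `I(R)_m = 0` for `m < N`. -/
noncomputable def idealPiece (N : ℕ) (R : Set (F K X)) (m : ℕ) : Submodule K (F K X) :=
  if m < N then ⊥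
  else ⨆ i ∈ Finset.range (m - N + 1),
    degSub K X i * Submodule.span K R * degSub K X (m - N - i)

/-- The two-sided ideal `I(R)` of `K⟨X⟩` generated by `R`, as a `K`-subspace. -/
noncomputable def idealSpan (R : Set (F K X)) : Submodule K (F K X) :=
  Submodule.span K {x | ∃ u v : FreeMonoid X, ∃ g ∈ R, x = wd K X u * g * wd K X v}

/-- `J_0 = K`, `J_1 = V`, and `J_n = ⋂_{i=0}^{l_N(n)−N} V^{⊗i}·R̄·V^{⊗l_N(n)−N−i}` for `n ≥ 2`. -/
noncomputable def Jspace (N : ℕ) (R : Set (F K X)) : ℕ → Submodule K (F K X)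
  | 0 => degSub K X 0
  | 1 => degSub K X 1
  | (n + 2) => ⨅ i ∈ Finset.range (lN N (n + 2) - N + 1),
      degSub K X i * Submodule.span K R * degSub K X (lN N (n + 2) - N - i)

open Classical in
/-- The reduction `r_{u·g·v}` of the presentation `⟨X|R⟩`: the linear endomorphism of `K⟨X⟩`
fixing every word other than `u·lm(g)·v` and sending `u·lm(g)·v` to `u·(lm(g)−g)·v`. -/
noncomputable def redMap (u : FreeMonoid X) (g : F K X) (v : FreeMonoid X) :
    F K X →ₗ[K] F K X :=
  Finsupp.linearCombination K (fun w : FreeMonoid X =>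
    if w = u * lm K X g * v then wd K X u * (wd K X (lm K X g) - g) * wd K X v
    else wd K X w) ∘ₗ (MonoidAlgebra.coeffLinearEquiv K).toLinearMap

/-- `f` is a normal form for `⟨X|R⟩` if it is fixed by every reduction. -/
def IsNormalForm (R : Set (F K X)) (f : F K X) : Prop :=
  ∀ u v : FreeMonoid X, ∀ g ∈ R, redMap K X u g v f = f

/-- `g` is a normal form of `f`: `g` is a normal form and is obtained from `f` by applying a
finite sequence of reductions of `⟨X|R⟩`. -/
def NormalFormOf (R : Set (F K X)) (f g : F K X) : Prop :=
  IsNormalForm K X R g ∧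
    ∃ L : List (FreeMonoid X × F K X × FreeMonoid X),
      (∀ p ∈ L, p.2.1 ∈ R) ∧
      g = L.foldr (fun p h => redMap K X p.1 p.2.1 p.2.2 h) f

/-- The presentation `⟨X|R⟩` is reduced: for every `f ∈ R`, `lm(f) − f` is a normal form for
`⟨X|R⟩` and `lm(f)` is a normal form for `⟨X | R∖{f}⟩`. -/
def Reduced (R : Set (F K X)) : Prop :=
  ∀ f ∈ R, IsNormalForm K X R (wd K X (lm K X f) - f) ∧
    IsNormalForm K X (R \ {f}) (wd K X (lm K X f))

/-- `R` consists of `N`-homogeneous elements with leading coefficient `1`. -/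
def NHomogLC1 (N : ℕ) (R : Set (F K X)) : Prop :=
  ∀ f ∈ R, f ∈ degSub K X N ∧ f.coeff (lm K X f) = 1

open Classical in
/-- The operator `S` of the presentation `⟨X|R⟩`: the endomorphism of `V^{⊗N}` sending `lm(f)`
to `lm(f) − f` for every `f ∈ R` and fixing all other words (extended by the identity on words
of other lengths). -/
noncomputable def Sop (R : Set (F K X)) : F K X →ₗ[K] F K X :=
  Finsupp.linearCombination K (fun w : FreeMonoid X =>
    if h : ∃ f ∈ R, lm K X f = w then wd K X w - h.choose else wd K X w) ∘ₗ
    (MonoidAlgebra.coeffLinearEquiv K).toLinearMap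

/-- `S ⊗ id_{V^{⊗b}}` realized on `K⟨X⟩`: on a word of length `a + b`, apply `S` to the first
`a` letters and the identity to the last `b` letters; the identity on all other words. -/
noncomputable def applyLeft (S : F K X →ₗ[K] F K X) (a b : ℕ) : F K X →ₗ[K] F K X :=
  Finsupp.linearCombination K (fun w : FreeMonoid X =>
    if wlen X w = a + b then
      S (wd K X (FreeMonoid.ofList ((FreeMonoid.toList w).take a))) *
        wd K X (FreeMonoid.ofList ((FreeMonoid.toList w).drop a))
    else wd K X w) ∘ₗ (MonoidAlgebra.coeffLinearEquiv K).toLinearMap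

/-- `id_{V^{⊗a}} ⊗ S` realized on `K⟨X⟩`: on a word of length `a + b`, apply the identity to
the first `a` letters and `S` to the last `b` letters; the identity on all other words. -/
noncomputable def applyRight (S : F K X →ₗ[K] F K X) (a b : ℕ) : F K X →ₗ[K] F K X :=
  Finsupp.linearCombination K (fun w : FreeMonoid X =>
    if wlen X w = a + b then
      wd K X (FreeMonoid.ofList ((FreeMonoid.toList w).take a)) *
        S (wd K X (FreeMonoid.ofList ((FreeMonoid.toList w).drop a)))
    else wd K X w) ∘ₗ (MonoidAlgebra.coeffLinearEquiv K).toLinearMap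

/-- The presentation `⟨X|R⟩` is side-confluent: for every `1 ≤ m ≤ N−1` there exists `k ≥ 1`
with `⟨id_{V^{⊗m}}⊗S, S⊗id_{V^{⊗m}}⟩^k = ⟨S⊗id_{V^{⊗m}}, id_{V^{⊗m}}⊗S⟩^k` on `V^{⊗N+m}`. -/
def SideConfluent (N : ℕ) (R : Set (F K X)) : Prop :=
  ∀ m : ℕ, 1 ≤ m → m ≤ N - 1 →
    ∃ k : ℕ, 1 ≤ k ∧
      ∀ f ∈ degSub K X (N + m),
        altProd (applyRight K X (Sop K X R) m N) (applyLeft K X (Sop K X R) N m) k f =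
          altProd (applyLeft K X (Sop K X R) N m) (applyRight K X (Sop K X R) m N) k f

/-- The extra-condition: `(V^{⊗n}⊗R̄) ∩ (R̄⊗V^{⊗n}) ⊆ V^{⊗n−1}⊗R̄⊗V` for every `2 ≤ n ≤ N−1`. -/
def ExtraCondition (N : ℕ) (R : Set (F K X)) : Prop :=
  ∀ n : ℕ, 2 ≤ n → n ≤ N - 1 →
    (degSub K X n * Submodule.span K R) ⊓ (Submodule.span K R * degSub K X n) ≤
      degSub K X (n - 1) * Submodule.span K R * degSub K X 1

/-- A reduction operator relative to `X^{(m)}`, realized as a linear endomorphism of `K⟨X⟩`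
extended by the identity outside of `V^{⊗m}`: an idempotent operator fixing each word of
length `m` or mapping it to an element of `V^{⊗m}` all of whose monomials are strictly
smaller. -/
structure IsRedOp (m : ℕ) (T : F K X →ₗ[K] F K X) : Prop where
  idem : T ∘ₗ T = T
  le : ∀ w : FreeMonoid X, wlen X w = m →
    T (wd K X w) = wd K X w ∨
      (T (wd K X w) ∈ degSub K X m ∧ ∀ u ∈ (T (wd K X w)).coeff.support, u < w)
  other : ∀ w : FreeMonoid X, wlen X w ≠ m → T (wd K X w) = wd K X w

/-- The kernel `I(R)_{m−l_N(n)} ⊗ V^{⊗l_N(n)}` of the reduction operator `F_1^{n,m}`. -/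
noncomputable def ker1 (N : ℕ) (R : Set (F K X)) (n m : ℕ) : Submodule K (F K X) :=
  idealPiece K X N R (m - lN N n) * degSub K X (lN N n)

/-- The kernel of the reduction operator `F_2^{n,m}`: `⊥` if `m < l_N(n+1)` (so that
`F_2^{n,m} = id`), and `V^{⊗m−l_N(n+1)} ⊗ J_{n+1}` otherwise. -/
noncomputable def ker2 (N : ℕ) (R : Set (F K X)) (n m : ℕ) : Submodule K (F K X) :=
  if m < lN N (n + 1) then ⊥
  else degSub K X (m - lN N (n + 1)) * Jspace K X N R (n + 1)

/-- The span of the normal words of length `d`, i.e. `φ(V^{⊗d})` where `φ` is the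
normal-form map. -/
noncomputable def nfSub (R : Set (F K X)) (d : ℕ) : Submodule K (F K X) :=
  Submodule.span K
    {x | ∃ w : FreeMonoid X, wlen X w = d ∧ IsNormalForm K X R (wd K X w) ∧ x = wd K X w}

/-- `Γ = (id − T2)·Σ_{i odd, 1 ≤ i ≤ k−1} ⟨T2,T1⟩^i`, the image of the element `γ1` of the
confluence algebra under the `(T1,T2)`-representation. -/
noncomputable def Gamma (T1 T2 : F K X →ₗ[K] F K X) (k : ℕ) : F K X →ₗ[K] F K X :=
  (1 - T2) * ∑ i ∈ (Finset.Icc 1 (k - 1)).filter (fun i => Odd i), altProd T2 T1 i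

end CC

theorem lexAppend {X : Type*} [LinearOrder X] : ∀ {s t : List X}, s.length = t.length →
    List.Lex (· < ·) s t → ∀ (b c : List X), List.Lex (· < ·) (s ++ b) (t ++ c) := by
  intro s t hlen h
  induction h with
  | nil => simp at hlen
  | @rel a as b bs hab => intro b c; exact List.Lex.rel hab
  | @cons a as bs h ih => intro b c; exact List.Lex.cons (ih (by simpa using hlen) b c)

theorem lexAppendLeft_iff {X : Type*} [LinearOrder X] (a s t : List X) :
    List.Lex (· < ·) (a ++ s) (a ++ t) ↔ List.Lex (· < ·) s t := by
  constructor
  · intro h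
    induction a with
    | nil => simpa using h
    | cons x xs ih =>
        cases h with
        | cons h => exact ih h
        | rel h => exact absurd h (lt_irrefl _)
  · intro h
    induction a with
    | nil => simpa
    | cons x xs ih => exact List.Lex.cons ih

namespace CC

variable (K : Type*) [Field K] (X : Type*) [Fintype X] [LinearOrder X]

lemma fm_lt_iff {u v : FreeMonoid X} :
    u < v ↔ List.Lex (· < ·) (FreeMonoid.toList u) (FreeMonoid.toList v) := Iff.rfl

lemma fm_mul_lt_mul {s t : FreeMonoid X} (hlen : wlen X s = wlen X t) (h : s < t)
    (p q q' : FreeMonoid X) : p * s * q < p * t * q' := by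
  rw [fm_lt_iff] at h ⊢
  simp only [FreeMonoid.toList_mul]
  rw [List.append_assoc, List.append_assoc, lexAppendLeft_iff]
  exact lexAppend hlen h _ _

lemma fm_mul_lt_mul_left {u s t : FreeMonoid X} : u * s < u * t ↔ s < t := by
  rw [fm_lt_iff, fm_lt_iff]
  simp only [FreeMonoid.toList_mul]
  exact lexAppendLeft_iff _ _ _

lemma fm_mul_le_mul_left {u s t : FreeMonoid X} : u * s ≤ u * t ↔ s ≤ t := by
  constructor
  · intro h
    by_contra hc
    exact absurd ((fm_mul_lt_mul_left X).mpr (lt_of_not_ge hc)) (not_lt_of_ge h)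
  · intro h
    rcases lt_or_eq_of_le h with h' | h'
    · exact le_of_lt ((fm_mul_lt_mul_left X).mpr h')
    · exact le_of_eq (by rw [h'])

lemma fm_mul_le_mul {s t : FreeMonoid X} (hlen : wlen X s = wlen X t) (h : s ≤ t)
    (p q : FreeMonoid X) : p * s * q ≤ p * t * q := by
  rcases lt_or_eq_of_le h with h' | h'
  · exact le_of_lt (fm_mul_lt_mul X hlen h' p q q)
  · exact le_of_eq (by rw [h'])

lemma wlen_mul (u v : FreeMonoid X) : wlen X (u * v) = wlen X u + wlen X v := by
  simp [wlen, FreeMonoid.toList_mul]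

lemma wd_eq_single (u : FreeMonoid X) : wd K X u = MonoidAlgebra.single u 1 := rfl

lemma wd_mul (u v : FreeMonoid X) : wd K X u * wd K X v = wd K X (u * v) := by
  simp [wd]

lemma wd_one : wd K X 1 = 1 := rfl

lemma wd_ne_zero (u : FreeMonoid X) : wd K X u ≠ 0 := by
  rw [wd_eq_single]
  simp [MonoidAlgebra.single_eq_zero]

lemma wd_support (u : FreeMonoid X) : (wd K X u).coeff.support = {u} := by
  rw [wd_eq_single, MonoidAlgebra.coeff_single]
  exact Finsupp.support_single_ne_zero u one_ne_zero

-- lm lemmas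
lemma coeff_ne_zero_of {f : F K X} (h0 : f ≠ 0) : f.coeff ≠ 0 :=
  fun h => h0 (MonoidAlgebra.coeff_injective (h.trans MonoidAlgebra.coeff_zero.symm))

lemma lm_mem_support {f : F K X} (h0 : f ≠ 0) : lm K X f ∈ f.coeff.support := by
  obtain ⟨a, ha⟩ := Finset.max_of_nonempty (Finsupp.support_nonempty_iff.mpr (coeff_ne_zero_of K X h0))
  have : lm K X f = a := by rw [lm, ha]; rfl
  rw [this]
  exact Finset.mem_of_max ha

lemma le_lm {f : F K X} {w : FreeMonoid X} (hw : w ∈ f.coeff.support) : w ≤ lm K X f := by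
  have h0 : f ≠ 0 := by rintro rfl; simp at hw
  obtain ⟨a, ha⟩ := Finset.max_of_nonempty (Finsupp.support_nonempty_iff.mpr (coeff_ne_zero_of K X h0))
  have hla : lm K X f = a := by rw [lm, ha]; rfl
  rw [hla]
  exact WithBot.coe_le_coe.mp (ha ▸ Finset.le_max hw)

lemma lm_eq_of {f : F K X} {w : FreeMonoid X} (hw : w ∈ f.coeff.support)
    (hle : ∀ w' ∈ f.coeff.support, w' ≤ w) : lm K X f = w := by
  have h0 : f ≠ 0 := by rintro rfl; simp at hw
  exact le_antisymm (hle _ (lm_mem_support K X h0)) (le_lm K X hw)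

lemma lm_wlen {f : F K X} {m : ℕ} (hf : f ∈ degSub K X m) (h0 : f ≠ 0) :
    wlen X (lm K X f) = m :=
  hf _ (lm_mem_support K X h0)

end CC
namespace CC

variable (K : Type*) [Field K] (X : Type*) [Fintype X] [LinearOrder X]

lemma conj_inj (p q : FreeMonoid X) : Function.Injective (fun s : FreeMonoid X => p * s * q) := by
  intro s t h
  simp only at h
  exact mul_left_cancel (mul_right_cancel h)

lemma conj_eq (p q : FreeMonoid X) (g : F K X) :
    (wd K X p * g * wd K X q).coeff = Finsupp.mapDomain (fun s => p * s * q) g.coeff := by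
  induction g using MonoidAlgebra.induction_linear with
  | zero => simp
  | add f g hf hg =>
      rw [mul_add, add_mul, MonoidAlgebra.coeff_add, hf, hg, MonoidAlgebra.coeff_add,
        Finsupp.mapDomain_add]
  | single a b =>
      rw [MonoidAlgebra.coeff_single, Finsupp.mapDomain_single, wd_eq_single, wd_eq_single]
      rw [MonoidAlgebra.single_mul_single, MonoidAlgebra.single_mul_single]
      simp

lemma mulWd_eq (u : FreeMonoid X) (g : F K X) :
    (wd K X u * g).coeff = Finsupp.mapDomain (fun s => u * s) g.coeff := by
  have := conj_eq K X u 1 g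
  simpa [wd_one] using this

lemma conj_apply (p q : FreeMonoid X) (g : F K X) (s : FreeMonoid X) :
    (wd K X p * g * wd K X q).coeff (p * s * q) = g.coeff s := by
  rw [conj_eq]
  exact Finsupp.mapDomain_apply (conj_inj X p q) g.coeff s

lemma conj_supp (p q : FreeMonoid X) (g : F K X) :
    (wd K X p * g * wd K X q).coeff.support ⊆ g.coeff.support.image (fun s => p * s * q) := by
  classical
  rw [conj_eq]
  exact Finsupp.mapDomain_support

lemma conj_lm (p q : FreeMonoid X) {g : F K X} {c : ℕ} (h0 : g ≠ 0)
    (hdeg : g ∈ degSub K X c) :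
    lm K X (wd K X p * g * wd K X q) = p * lm K X g * q ∧
      (wd K X p * g * wd K X q).coeff (p * lm K X g * q) = g.coeff (lm K X g) := by
  classical
  constructor
  · apply lm_eq_of
    · rw [Finsupp.mem_support_iff, conj_apply]
      exact Finsupp.mem_support_iff.mp (lm_mem_support K X h0)
    · intro w' hw'
      obtain ⟨s, hs, rfl⟩ := Finset.mem_image.mp (conj_supp K X p q g hw')
      exact fm_mul_le_mul X (by rw [hdeg _ hs, lm_wlen K X hdeg h0]) (le_lm K X hs) p q
  · exact conj_apply K X p q g _

-- degSub lemmas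
lemma wd_mem_degSub (w : FreeMonoid X) : wd K X w ∈ degSub K X (wlen X w) := by
  intro u hu
  rw [wd_support] at hu
  rw [Finset.mem_singleton.mp hu]

lemma degSub_mul (a b : ℕ) : degSub K X a * degSub K X b ≤ degSub K X (a + b) := by
  classical
  rw [Submodule.mul_le]
  intro f hf g hg w hw
  obtain ⟨p, hp, q, hq, rfl⟩ := Finset.mem_mul.mp (MonoidAlgebra.support_coeff_mul_subset f g hw)
  rw [wlen_mul, hf _ hp, hg _ hq]

lemma spanR_le_degSub {N : ℕ} {R : Set (F K X)} (hhom : NHomogLC1 K X N R) :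
    Submodule.span K R ≤ degSub K X N := by
  rw [Submodule.span_le]
  intro g hg
  exact (hhom g hg).1

lemma repr_sum (x : F K X) : x = ∑ w ∈ x.coeff.support, x.coeff w • wd K X w := by
  conv_lhs => rw [← MonoidAlgebra.sum_coeff_single x]
  rw [Finsupp.sum]
  congr 1
  funext w
  rw [wd_eq_single, MonoidAlgebra.smul_single', mul_one]

lemma mem_of_supp {S : Submodule K (F K X)} {x : F K X}
    (h : ∀ w ∈ x.coeff.support, wd K X w ∈ S) : x ∈ S := by
  rw [repr_sum K X x]
  exact Submodule.sum_mem S fun w hw => Submodule.smul_mem S _ (h w hw)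

-- finiteness and measure
lemma finite_len (m : ℕ) : {w : FreeMonoid X | wlen X w = m}.Finite := by
  have : {w : FreeMonoid X | wlen X w = m} =
      FreeMonoid.toList ⁻¹' {l : List X | l.length = m} := rfl
  rw [this]
  exact Set.Finite.preimage (Set.injOn_of_injective FreeMonoid.toList.injective)
    (List.finite_length_eq X m)

noncomputable def msrW (m : ℕ) (w : FreeMonoid X) : ℕ :=
  {w' : FreeMonoid X | wlen X w' = m ∧ w' ≤ w}.ncard

lemma msrW_finite (m : ℕ) (w : FreeMonoid X) :
    {w' : FreeMonoid X | wlen X w' = m ∧ w' ≤ w}.Finite :=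
  Set.Finite.subset (finite_len X m) (fun _ h => h.1)

lemma msrW_pos {m : ℕ} {w : FreeMonoid X} (hw : wlen X w = m) : 0 < msrW X m w := by
  rw [msrW, Set.ncard_pos (msrW_finite X m w)]
  exact ⟨w, hw, le_refl w⟩

lemma msrW_mono {m : ℕ} {w w' : FreeMonoid X} (hw : wlen X w = m) (h : w' < w) :
    msrW X m w' < msrW X m w := by
  apply Set.ncard_lt_ncard _ (msrW_finite X m w)
  constructor
  · intro u hu
    exact ⟨hu.1, le_trans hu.2 (le_of_lt h)⟩
  · intro hsub
    have := hsub ⟨hw, le_refl w⟩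
    exact absurd (lt_of_le_of_lt this.2 h) (lt_irrefl w)

end CC
namespace CC

variable (K : Type*) [Field K] (X : Type*) [Fintype X] [LinearOrder X]

lemma redop_idem {m : ℕ} {T : F K X →ₗ[K] F K X} (hT : IsRedOp K X m T) (x : F K X) :
    T (T x) = T x := by
  have := LinearMap.ext_iff.mp hT.idem x
  simpa using this

lemma redop_wd_mem {m : ℕ} {T : F K X →ₗ[K] F K X} (hT : IsRedOp K X m T)
    {w : FreeMonoid X} (hw : wlen X w = m) : T (wd K X w) ∈ degSub K X m := by
  rcases hT.le w hw with h | h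
  · rw [h]; exact hw ▸ wd_mem_degSub K X w
  · exact h.1

lemma redop_wd_supp_le {m : ℕ} {T : F K X →ₗ[K] F K X} (hT : IsRedOp K X m T)
    {w : FreeMonoid X} (hw : wlen X w = m) :
    ∀ u ∈ (T (wd K X w)).coeff.support, u ≤ w := by
  intro u hu
  rcases hT.le w hw with h | h
  · rw [h, wd_support] at hu
    exact le_of_eq (Finset.mem_singleton.mp hu)
  · exact le_of_lt (h.2 u hu)

lemma redop_apply_sum {T : F K X →ₗ[K] F K X} (x : F K X) :
    T x = ∑ w ∈ x.coeff.support, x.coeff w • T (wd K X w) := by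
  conv_lhs => rw [repr_sum K X x]
  rw [map_sum]
  simp [map_smul]

lemma redop_map_deg {m : ℕ} {T : F K X →ₗ[K] F K X} (hT : IsRedOp K X m T)
    {x : F K X} (hx : x ∈ degSub K X m) : T x ∈ degSub K X m := by
  rw [redop_apply_sum K X x]
  exact Submodule.sum_mem _ fun w hw =>
    Submodule.smul_mem _ _ (redop_wd_mem K X hT (hx w hw))

lemma redop_supp_lt {m : ℕ} {T : F K X →ₗ[K] F K X} (hT : IsRedOp K X m T)
    {x : F K X} (hx : x ∈ degSub K X m) {v : FreeMonoid X}
    (hlt : ∀ w ∈ x.coeff.support, w < v) : ∀ u ∈ (T x).coeff.support, u < v := by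
  classical
  intro u hu
  rw [redop_apply_sum K X x, MonoidAlgebra.coeff_sum] at hu
  obtain ⟨w, hw, hu'⟩ := Finset.mem_biUnion.mp (Finsupp.support_finset_sum hu)
  have hu2 : u ∈ (T (wd K X w)).coeff.support := Finsupp.support_smul hu'
  exact lt_of_le_of_lt (redop_wd_supp_le K X hT (hx w hw) u hu2) (hlt w hw)

/-- The subspace of elements supported on `T`-fixed words of length `m`. -/
noncomputable def fixSub (m : ℕ) (T : F K X →ₗ[K] F K X) : Submodule K (F K X) where
  carrier := {f | ∀ w ∈ f.coeff.support, wlen X w = m ∧ T (wd K X w) = wd K X w}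
  add_mem' := by
    intro a b ha hb w hw
    rcases Finset.mem_union.mp (Finsupp.support_add hw) with h | h
    · exact ha w h
    · exact hb w h
  zero_mem' := by intro w hw; simp at hw
  smul_mem' := by intro c f hf w hw; exact hf w (Finsupp.support_smul hw)

lemma fixSub_fixed {m : ℕ} {T : F K X →ₗ[K] F K X} {x : F K X}
    (hx : x ∈ fixSub K X m T) : T x = x := by
  rw [redop_apply_sum K X x]
  conv_rhs => rw [repr_sum K X x]
  exact Finset.sum_congr rfl fun w hw => by rw [(hx w hw).2]

lemma degSub_le_fix_sup_ker {m : ℕ} {T : F K X →ₗ[K] F K X} (hT : IsRedOp K X m T) :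
    degSub K X m ≤ fixSub K X m T ⊔ LinearMap.ker T := by
  have key : ∀ c : ℕ, ∀ w : FreeMonoid X, wlen X w = m → msrW X m w < c →
      wd K X w ∈ fixSub K X m T ⊔ LinearMap.ker T := by
    intro c
    induction c with
    | zero => intro w hw hlt; exact absurd hlt (Nat.not_lt_zero _)
    | succ c ih =>
        intro w hw hlt
        by_cases hfix : T (wd K X w) = wd K X w
        · apply Submodule.mem_sup_left
          intro u hu
          rw [wd_support, Finset.mem_singleton] at hu
          subst hu
          exact ⟨hw, hfix⟩
        · rcases hT.le w hw with h | h
          · exact absurd h hfix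
          · have hker : wd K X w - T (wd K X w) ∈ LinearMap.ker T := by
              rw [LinearMap.mem_ker, map_sub, redop_idem K X hT, sub_self]
            have hdecomp : wd K X w = T (wd K X w) + (wd K X w - T (wd K X w)) := by abel
            rw [hdecomp]
            apply Submodule.add_mem _ _ (Submodule.mem_sup_right hker)
            apply mem_of_supp
            intro u hu
            exact ih u (h.1 u hu)
              (lt_of_lt_of_le (msrW_mono X hw (h.2 u hu)) (Nat.lt_succ_iff.mp hlt))
  intro x hx
  apply mem_of_supp
  intro w hw
  exact key (msrW X m w + 1) w (hx w hw) (Nat.lt_succ_self _)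

lemma redop_fix_span {m : ℕ} {T : F K X →ₗ[K] F K X} (hT : IsRedOp K X m T)
    {x : F K X} (hx : x ∈ degSub K X m) : T x ∈ fixSub K X m T := by
  obtain ⟨a, ha, b, hb, rfl⟩ := Submodule.mem_sup.mp (degSub_le_fix_sup_ker K X hT hx)
  rw [map_add, LinearMap.mem_ker.mp hb, add_zero, fixSub_fixed K X ha]
  exact ha

lemma redop_lm_not_fix {m : ℕ} {T : F K X →ₗ[K] F K X} (hT : IsRedOp K X m T)
    {h : F K X} (hker : T h = 0) (h0 : h ≠ 0) (hdeg : h ∈ degSub K X m) :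
    T (wd K X (lm K X h)) ≠ wd K X (lm K X h) := by
  intro hfix
  set v := lm K X h with hv_def
  have hv : h.coeff v ≠ 0 := Finsupp.mem_support_iff.mp (lm_mem_support K X h0)
  have hvlen : wlen X v = m := lm_wlen K X hdeg h0
  set tail := h - h.coeff v • wd K X v with htail
  have htail_supp : ∀ w ∈ tail.coeff.support, w < v := by
    intro w hw
    have hwv : w ≠ v := by
      intro hwv
      rw [hwv] at hw
      have h2 : tail.coeff v = 0 := by
        rw [htail, MonoidAlgebra.coeff_sub, Finsupp.sub_apply, wd_eq_single,
          MonoidAlgebra.smul_single', MonoidAlgebra.coeff_single]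
        simp
      exact Finsupp.mem_support_iff.mp hw h2
    have : w ∈ h.coeff.support ∪ (h.coeff v • wd K X v).coeff.support := Finsupp.support_sub hw
    rcases Finset.mem_union.mp this with h1 | h1
    · exact lt_of_le_of_ne (le_lm K X h1) hwv
    · have : w ∈ (wd K X v).coeff.support := Finsupp.support_smul h1
      rw [wd_support, Finset.mem_singleton] at this
      exact absurd this hwv
  have htdeg : tail ∈ degSub K X m :=
    Submodule.sub_mem _ hdeg (Submodule.smul_mem _ _ (hvlen ▸ wd_mem_degSub K X v))
  have heq : (0 : F K X) = h.coeff v • wd K X v + T tail := by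
    rw [← hker]
    conv_lhs => rw [show h = h.coeff v • wd K X v + tail by rw [htail]; abel]
    rw [map_add, map_smul, hfix]
  have hTtv : (T tail).coeff v = 0 := by
    by_contra hc
    exact absurd (redop_supp_lt K X hT htdeg htail_supp v (Finsupp.mem_support_iff.mpr hc))
      (lt_irrefl v)
  have h3 := congrArg (fun f : F K X => f.coeff v) heq
  simp only [MonoidAlgebra.coeff_zero, Finsupp.coe_zero, Pi.zero_apply] at h3
  rw [MonoidAlgebra.coeff_add, Finsupp.add_apply, MonoidAlgebra.coeff_smul, Finsupp.smul_apply, hTtv,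
    wd_eq_single, MonoidAlgebra.coeff_single, Finsupp.single_eq_same] at h3
  simp at h3
  exact hv h3.symm

end CC
namespace CC

variable (K : Type*) [Field K] (X : Type*) [Fintype X] [LinearOrder X]

lemma lN_even (N a : ℕ) : lN N (2 * a) = a * N := by
  have h2 : (2 * a) / 2 = a := by omega
  simp [lN, h2, even_two_mul a]

lemma lN_odd (N a : ℕ) : lN N (2 * a + 1) = a * N + 1 := by
  have h2 : (2 * a + 1) / 2 = a := by omega
  have : ¬ Even (2 * a + 1) := by simp [Nat.even_add_one, even_two_mul a]
  simp [lN, h2, this]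

lemma lN_le_succ {N : ℕ} (hN : 2 ≤ N) (n : ℕ) : lN N n ≤ lN N (n + 1) := by
  rcases Nat.even_or_odd n with ⟨a, ha⟩ | ⟨a, ha⟩
  · have hn : n = 2 * a := by omega
    subst hn
    rw [lN_even, lN_odd]
    exact Nat.le_succ _
  · have hn : n = 2 * a + 1 := by omega
    subst hn
    rw [lN_odd]
    have : 2 * a + 1 + 1 = 2 * (a + 1) := by ring
    rw [this, lN_even, add_mul, one_mul]
    exact Nat.add_le_add_left (by omega) _

lemma N_le_lN_two {N : ℕ} (hN : 2 ≤ N) (j : ℕ) : N ≤ lN N (j + 2) := by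
  rcases Nat.even_or_odd j with ⟨a, ha⟩ | ⟨a, ha⟩
  · have hn : j + 2 = 2 * (a + 1) := by omega
    rw [hn, lN_even, add_mul, one_mul]
    exact Nat.le_add_left _ _
  · have hn : j + 2 = 2 * (a + 1) + 1 := by omega
    rw [hn, lN_odd, add_mul, one_mul]
    omega

lemma J_le_deg {N : ℕ} {R : Set (F K X)} (hN : 2 ≤ N) (hhom : NHomogLC1 K X N R) (n : ℕ) :
    Jspace K X N R (n + 1) ≤ degSub K X (lN N (n + 1)) := by
  cases n with
  | zero =>
      show Jspace K X N R 1 ≤ _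
      have h1 : lN N 1 = 1 := by
        have := lN_odd N 0
        simpa using this
      rw [h1]
      exact le_of_eq rfl
  | succ j =>
      show Jspace K X N R (j + 2) ≤ _
      have hNl : N ≤ lN N (j + 2) := N_le_lN_two hN j
      have h0mem : 0 ∈ Finset.range (lN N (j + 2) - N + 1) := by
        simp
      calc Jspace K X N R (j + 2)
          ≤ degSub K X 0 * Submodule.span K R * degSub K X (lN N (j + 2) - N - 0) := by
            exact iInf₂_le 0 h0mem
        _ ≤ degSub K X 0 * degSub K X N * degSub K X (lN N (j + 2) - N) := by
            apply mul_le_mul' _ (le_refl _)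
            exact mul_le_mul' (le_refl _) (spanR_le_degSub K X hhom)
        _ ≤ degSub K X (0 + N) * degSub K X (lN N (j + 2) - N) :=
            mul_le_mul' (degSub_mul K X 0 N) (le_refl _)
        _ ≤ degSub K X (0 + N + (lN N (j + 2) - N)) := degSub_mul K X _ _
        _ = degSub K X (lN N (j + 2)) := by
            congr 1
            omega

lemma idealPiece_le_deg {N : ℕ} {R : Set (F K X)} (hhom : NHomogLC1 K X N R) (d : ℕ) :
    idealPiece K X N R d ≤ degSub K X d := by
  rw [idealPiece]
  split_ifs with h
  · exact bot_le
  · apply iSup₂_le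
    intro i hi
    rw [Finset.mem_range] at hi
    calc degSub K X i * Submodule.span K R * degSub K X (d - N - i)
        ≤ degSub K X i * degSub K X N * degSub K X (d - N - i) :=
          mul_le_mul' (mul_le_mul' (le_refl _) (spanR_le_degSub K X hhom))
            (le_refl _)
      _ ≤ degSub K X (i + N) * degSub K X (d - N - i) :=
          mul_le_mul' (degSub_mul K X i N) (le_refl _)
      _ ≤ degSub K X (i + N + (d - N - i)) := degSub_mul K X _ _
      _ = degSub K X d := by congr 1; omega

lemma ker1_le_deg {N n m : ℕ} {R : Set (F K X)} (hhom : NHomogLC1 K X N R)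
    (hnm : lN N n ≤ m) : ker1 K X N R n m ≤ degSub K X m := by
  calc ker1 K X N R n m
      ≤ degSub K X (m - lN N n) * degSub K X (lN N n) :=
        mul_le_mul' (idealPiece_le_deg K X hhom _) (le_refl _)
    _ ≤ degSub K X (m - lN N n + lN N n) := degSub_mul K X _ _
    _ = degSub K X m := by congr 1; omega

lemma ker2_le_deg {N n m : ℕ} {R : Set (F K X)} (hN : 2 ≤ N) (hhom : NHomogLC1 K X N R)
    (hm : lN N (n + 1) ≤ m) :
    degSub K X (m - lN N (n + 1)) * Jspace K X N R (n + 1) ≤ degSub K X m := by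
  calc degSub K X (m - lN N (n + 1)) * Jspace K X N R (n + 1)
      ≤ degSub K X (m - lN N (n + 1)) * degSub K X (lN N (n + 1)) :=
        mul_le_mul' (le_refl _) (J_le_deg K X hN hhom n)
    _ ≤ degSub K X (m - lN N (n + 1) + lN N (n + 1)) := degSub_mul K X _ _
    _ = degSub K X m := by congr 1; omega

/-- `u` contains no `lm g`, `g ∈ R`, as a factor. -/
def noFac (R : Set (F K X)) (u : FreeMonoid X) : Prop :=
  ¬ ∃ g ∈ R, ∃ a b : FreeMonoid X, u = a * lm K X g * b

lemma noFac_normal {R : Set (F K X)} {u : FreeMonoid X} (h : noFac K X R u) :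
    IsNormalForm K X R (wd K X u) := by
  intro u' v' g hg
  show Finsupp.linearCombination K _ (Finsupp.single u (1:K)) = _
  rw [Finsupp.linearCombination_single, one_smul,
    if_neg (fun heq => h ⟨g, hg, u', v', heq⟩)]

lemma noFac_take {R : Set (F K X)} {u : FreeMonoid X} {d e : ℕ} (hde : d ≤ e)
    (h : noFac K X R (FreeMonoid.ofList ((FreeMonoid.toList u).take e))) :
    noFac K X R (FreeMonoid.ofList ((FreeMonoid.toList u).take d)) := by
  rintro ⟨g, hg, a, b, heq⟩
  apply h
  refine ⟨g, hg, a, b * FreeMonoid.ofList (((FreeMonoid.toList u).take e).drop d), ?_⟩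
  apply FreeMonoid.toList.injective
  have hdd : (FreeMonoid.toList u).take d = ((FreeMonoid.toList u).take e).take d := by
    rw [List.take_take, min_eq_left hde]
  calc FreeMonoid.toList (FreeMonoid.ofList ((FreeMonoid.toList u).take e))
      = ((FreeMonoid.toList u).take e).take d ++ ((FreeMonoid.toList u).take e).drop d := by
        rw [FreeMonoid.toList_ofList, List.take_append_drop]
    _ = FreeMonoid.toList (a * lm K X g * (b *
          FreeMonoid.ofList (((FreeMonoid.toList u).take e).drop d))) := by
        rw [← hdd]
        have h2 : List.take d (FreeMonoid.toList u) = FreeMonoid.toList (a * lm K X g * b) := by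
          rw [← heq, FreeMonoid.toList_ofList]
        rw [h2]
        simp [FreeMonoid.toList_mul, FreeMonoid.toList_ofList, List.append_assoc]

end CC
namespace CC

variable (K : Type*) [Field K] (X : Type*) [Fintype X] [LinearOrder X]

lemma hom_ne_zero {N : ℕ} {R : Set (F K X)} (hhom : NHomogLC1 K X N R) {g : F K X}
    (hg : g ∈ R) : g ≠ 0 := by
  intro h0
  have := (hhom g hg).2
  rw [h0] at this
  simp at this

lemma lm_R_len {N : ℕ} {R : Set (F K X)} (hhom : NHomogLC1 K X N R) {g : F K X}
    (hg : g ∈ R) : wlen X (lm K X g) = N :=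
  lm_wlen K X (hhom g hg).1 (hom_ne_zero K X hhom hg)

lemma factor_mem_ker1 {N n m : ℕ} {R : Set (F K X)} (hhom : NHomogLC1 K X N R)
    (hnm : lN N n ≤ m) {w : FreeMonoid X} (hw : wlen X w = m)
    (hfac : ¬ noFac K X R (FreeMonoid.ofList ((FreeMonoid.toList w).take (m - lN N n)))) :
    ∃ h : F K X, h ∈ ker1 K X N R n m ∧ h ≠ 0 ∧ lm K X h = w ∧ h ∈ degSub K X m := by
  rw [noFac, not_not] at hfac
  obtain ⟨g, hg, a, b, heq⟩ := hfac
  have hgne : g ≠ 0 := hom_ne_zero K X hhom hg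
  have hglen : wlen X (lm K X g) = N := lm_R_len K X hhom hg
  set d' := m - lN N n with hd'
  set v := FreeMonoid.ofList ((FreeMonoid.toList w).drop d') with hv_def
  have hvlen : wlen X v = lN N n := by
    simp only [hv_def, wlen, FreeMonoid.toList_ofList, List.length_drop]
    have hwl : (FreeMonoid.toList w).length = m := hw
    omega
  have htakelen : ((FreeMonoid.toList w).take d').length = d' := by
    rw [List.length_take, min_eq_left]
    have hwl : (FreeMonoid.toList w).length = m := hw
    omega
  have hlen3 : wlen X a + N + wlen X b = d' := by
    have h5 := congrArg (fun u : FreeMonoid X => (FreeMonoid.toList u).length) heq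
    simp only [FreeMonoid.toList_ofList, FreeMonoid.toList_mul, List.length_append] at h5
    rw [htakelen] at h5
    have ha' : (FreeMonoid.toList a).length = wlen X a := rfl
    have hb' : (FreeMonoid.toList b).length = wlen X b := rfl
    have hg' : (FreeMonoid.toList (lm K X g)).length = N := hglen
    omega
  have hw_eq : w = a * lm K X g * b * v := by
    apply FreeMonoid.toList.injective
    calc FreeMonoid.toList w
        = (FreeMonoid.toList w).take d' ++ (FreeMonoid.toList w).drop d' :=
          (List.take_append_drop _ _).symm
      _ = FreeMonoid.toList (a * lm K X g * b) ++ FreeMonoid.toList v := by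
          have h6 : (FreeMonoid.toList w).take d' = FreeMonoid.toList (a * lm K X g * b) := by
            rw [← FreeMonoid.toList_ofList ((FreeMonoid.toList w).take d'), heq]
          rw [h6, hv_def, FreeMonoid.toList_ofList]
      _ = FreeMonoid.toList (a * lm K X g * b * v) := by
          simp [FreeMonoid.toList_mul, List.append_assoc]
  refine ⟨wd K X a * g * wd K X b * wd K X v, ?_, ?_, ?_, ?_⟩
  · -- membership in ker1
    have hmem1 : wd K X a * g * wd K X b ∈
        degSub K X (wlen X a) * Submodule.span K R * degSub K X (wlen X b) :=
      Submodule.mul_mem_mul (Submodule.mul_mem_mul (wd_mem_degSub K X a)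
        (Submodule.subset_span hg)) (wd_mem_degSub K X b)
    have hle : degSub K X (wlen X a) * Submodule.span K R * degSub K X (wlen X b) ≤
        idealPiece K X N R d' := by
      rw [idealPiece, if_neg (by omega)]
      have hidx : d' - N - wlen X a = wlen X b := by omega
      have hmem : wlen X a ∈ Finset.range (d' - N + 1) := by
        rw [Finset.mem_range]; omega
      have := le_iSup₂ (f := fun i (_ : i ∈ Finset.range (d' - N + 1)) =>
        degSub K X i * Submodule.span K R * degSub K X (d' - N - i)) (wlen X a) hmem
      rw [hidx] at this
      exact this
    exact Submodule.mul_mem_mul (hle hmem1) (hvlen ▸ wd_mem_degSub K X v)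
  · -- nonzero
    have hco := (conj_lm K X a (b * v) hgne (hhom g hg).1).2
    have hform : wd K X a * g * wd K X (b * v) = wd K X a * g * wd K X b * wd K X v := by
      rw [← wd_mul, ← mul_assoc]
    intro h0
    rw [hform, h0, (hhom g hg).2] at hco
    simp at hco
  · -- leading monomial
    have hco := conj_lm K X a (b * v) hgne (hhom g hg).1
    have hform : wd K X a * g * wd K X (b * v) = wd K X a * g * wd K X b * wd K X v := by
      rw [← wd_mul, ← mul_assoc]
    rw [← hform, hco.1, ← mul_assoc]
    exact hw_eq.symm
  · -- degree
    have hk1 : wd K X a * g * wd K X b * wd K X v ∈ ker1 K X N R n m := by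
      have hmem1 : wd K X a * g * wd K X b ∈
          degSub K X (wlen X a) * Submodule.span K R * degSub K X (wlen X b) :=
        Submodule.mul_mem_mul (Submodule.mul_mem_mul (wd_mem_degSub K X a)
          (Submodule.subset_span hg)) (wd_mem_degSub K X b)
      have hle : degSub K X (wlen X a) * Submodule.span K R * degSub K X (wlen X b) ≤
          idealPiece K X N R d' := by
        rw [idealPiece, if_neg (by omega)]
        have hidx : d' - N - wlen X a = wlen X b := by omega
        have hmem : wlen X a ∈ Finset.range (d' - N + 1) := by
          rw [Finset.mem_range]; omega
        have := le_iSup₂ (f := fun i (_ : i ∈ Finset.range (d' - N + 1)) =>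
          degSub K X i * Submodule.span K R * degSub K X (d' - N - i)) (wlen X a) hmem
        rw [hidx] at this
        exact this
      exact Submodule.mul_mem_mul (hle hmem1) (hvlen ▸ wd_mem_degSub K X v)
    exact ker1_le_deg K X hhom hnm hk1

-- the left-prefix extraction map
lemma fm_mul_left_inj (u : FreeMonoid X) : Function.Injective (fun s : FreeMonoid X => u * s) :=
  fun s t h => mul_left_cancel h

noncomputable def piL (u : FreeMonoid X) (z : F K X) : F K X :=
  MonoidAlgebra.ofCoeff (Finsupp.comapDomain (fun s => u * s) z.coeff ((fm_mul_left_inj X u).injOn))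

lemma piL_apply (u : FreeMonoid X) (z : F K X) (s : FreeMonoid X) :
    (piL K X u z).coeff s = z.coeff (u * s) := by
  rw [piL, MonoidAlgebra.coeff_ofCoeff, Finsupp.comapDomain_apply]

lemma piL_add (u : FreeMonoid X) (y z : F K X) :
    piL K X u (y + z) = piL K X u y + piL K X u z := by
  ext s
  simp only [MonoidAlgebra.coeff_add, Finsupp.add_apply, piL_apply]

lemma coeff_mul_left {d : ℕ} {x : F K X} (hx : x ∈ degSub K X d) (j : F K X)
    {u : FreeMonoid X} (hu : wlen X u = d) (s : FreeMonoid X) :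
    (x * j).coeff (u * s) = x.coeff u * j.coeff s := by
  classical
  have hxj : x * j = ∑ p ∈ x.coeff.support, x.coeff p • (wd K X p * j) := by
    conv_lhs => rw [repr_sum K X x]
    rw [Finset.sum_mul]
    exact Finset.sum_congr rfl fun p _ => smul_mul_assoc _ _ _
  rw [hxj, MonoidAlgebra.coeff_sum, Finsupp.finset_sum_apply]
  have hterm : ∀ p ∈ x.coeff.support,
      (x.coeff p • (wd K X p * j)).coeff (u * s) = if p = u then x.coeff p * j.coeff s else 0 := by
    intro p hp
    rw [MonoidAlgebra.coeff_smul, Finsupp.smul_apply, smul_eq_mul, mulWd_eq]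
    by_cases hpu : p = u
    · subst hpu
      rw [if_pos rfl, Finsupp.mapDomain_apply (fm_mul_left_inj X p)]
    · rw [if_neg hpu]
      have : (u * s) ∉ Set.range (fun t : FreeMonoid X => p * t) := by
        rintro ⟨t, ht⟩
        apply hpu
        have := congrArg FreeMonoid.toList ht
        simp only [FreeMonoid.toList_mul] at this
        have hlen : (FreeMonoid.toList p).length = (FreeMonoid.toList u).length := by
          have := hx p hp
          rw [wlen] at this hu
          rw [this, hu]
        exact FreeMonoid.toList.injective (List.append_inj this.symm hlen.symm).1.symm
      rw [Finsupp.mapDomain_of_notMem_range _ _ this, mul_zero]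
  rw [Finset.sum_congr rfl hterm, Finset.sum_ite_eq' x.coeff.support u (fun p => x.coeff p * j.coeff s)]
  by_cases hmem : u ∈ x.coeff.support
  · rw [if_pos hmem]
  · rw [if_neg hmem, Finsupp.notMem_support_iff.mp hmem, zero_mul]

lemma piL_mem_J {d : ℕ} {J : Submodule K (F K X)} {z : F K X}
    (hz : z ∈ degSub K X d * J) :
    ∀ u : FreeMonoid X, wlen X u = d → piL K X u z ∈ J := by
  refine Submodule.mul_induction_on hz ?_ ?_
  · intro x hx j hj u hu
    have heq : piL K X u (x * j) = x.coeff u • j := by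
      ext s
      rw [piL_apply, MonoidAlgebra.coeff_smul, Finsupp.smul_apply, smul_eq_mul]
      exact coeff_mul_left K X hx j hu s
    rw [heq]
    exact Submodule.smul_mem _ _ hj
  · intro y z hy hz u hu
    rw [piL_add]
    exact Submodule.add_mem _ (hy u hu) (hz u hu)

end CC
namespace CC

variable (K : Type*) [Field K] (X : Type*) [Fintype X] [LinearOrder X]

noncomputable def msrS (m : ℕ) (z : F K X) : ℕ :=
  {w' : FreeMonoid X | wlen X w' = m ∧ ∃ v ∈ z.coeff.support, w' ≤ v}.ncard

lemma msrS_finite (m : ℕ) (z : F K X) :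
    {w' : FreeMonoid X | wlen X w' = m ∧ ∃ v ∈ z.coeff.support, w' ≤ v}.Finite :=
  Set.Finite.subset (finite_len X m) (fun _ h => h.1)

lemma msrS_lt {m : ℕ} {z z' : F K X} (hz : z ∈ degSub K X m) (h0 : z ≠ 0)
    (hlt : ∀ w ∈ z'.coeff.support, w < lm K X z) : msrS K X m z' < msrS K X m z := by
  apply Set.ncard_lt_ncard _ (msrS_finite K X m z)
  constructor
  · rintro u ⟨hu1, v, hv, hu2⟩
    exact ⟨hu1, lm K X z, lm_mem_support K X h0, le_trans hu2 (le_of_lt (hlt v hv))⟩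
  · intro hsub
    have hmem := hsub ⟨lm_wlen K X hz h0, lm K X z, lm_mem_support K X h0, le_refl _⟩
    obtain ⟨_, v, hv, hle⟩ := hmem
    exact absurd (lt_of_le_of_lt hle (hlt v hv)) (lt_irrefl _)

lemma key_step {N n m : ℕ} {R : Set (F K X)} {T2 : F K X →ₗ[K] F K X}
    (hN : 2 ≤ N) (hhom : NHomogLC1 K X N R) (hm : lN N (n + 1) ≤ m)
    (hT2 : IsRedOp K X m T2)
    (hkT2 : LinearMap.ker T2 = degSub K X (m - lN N (n + 1)) * Jspace K X N R (n + 1)) :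
    ∀ c : ℕ, ∀ z : F K X, z ∈ degSub K X (m - lN N (n + 1)) * Jspace K X N R (n + 1) →
      (∀ w ∈ z.coeff.support,
        noFac K X R (FreeMonoid.ofList ((FreeMonoid.toList w).take (m - lN N (n + 1)))) ∨
          T2 (wd K X w) = wd K X w) →
      msrS K X m z < c →
      z ∈ nfSub K X R (m - lN N (n + 1)) * Jspace K X N R (n + 1) := by
  intro c
  induction c with
  | zero => intro z _ _ hlt; exact absurd hlt (Nat.not_lt_zero _)
  | succ c ih =>
    intro z hz hsupp hlt
    by_cases h0 : z = 0
    · rw [h0]; exact Submodule.zero_mem _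
    set d := m - lN N (n + 1) with hd
    have hdm : d ≤ m := Nat.sub_le _ _
    have hdegm : z ∈ degSub K X m := ker2_le_deg K X hN hhom hm hz
    have hzlm : wlen X (lm K X z) = m := lm_wlen K X hdegm h0
    have hker : T2 z = 0 := by
      rw [← LinearMap.mem_ker, hkT2]; exact hz
    have hnotfix := redop_lm_not_fix K X hT2 hker h0 hdegm
    have hNP : noFac K X R
        (FreeMonoid.ofList ((FreeMonoid.toList (lm K X z)).take d)) := by
      rcases hsupp (lm K X z) (lm_mem_support K X h0) with h | h
      · exact h
      · exact absurd h hnotfix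
    set u0 := FreeMonoid.ofList ((FreeMonoid.toList (lm K X z)).take d) with hu0
    set s0 := FreeMonoid.ofList ((FreeMonoid.toList (lm K X z)).drop d) with hs0
    have hu0len : wlen X u0 = d := by
      simp only [hu0, wlen, FreeMonoid.toList_ofList, List.length_take]
      have : (FreeMonoid.toList (lm K X z)).length = m := hzlm
      omega
    have hsplit : lm K X z = u0 * s0 := by
      apply FreeMonoid.toList.injective
      rw [FreeMonoid.toList_mul, hu0, hs0, FreeMonoid.toList_ofList, FreeMonoid.toList_ofList,
        List.take_append_drop]
    set j := piL K X u0 z with hjdef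
    have hj : j ∈ Jspace K X N R (n + 1) := piL_mem_J K X hz u0 hu0len
    have hjs0 : j.coeff s0 = z.coeff (lm K X z) := by
      rw [hjdef, piL_apply, ← hsplit]
    have hzlmne : z.coeff (lm K X z) ≠ 0 := Finsupp.mem_support_iff.mp (lm_mem_support K X h0)
    have hjne : j ≠ 0 := by
      intro hj0; rw [hj0] at hjs0; simp at hjs0; exact hzlmne hjs0.symm
    have hs0supp : s0 ∈ j.coeff.support := Finsupp.mem_support_iff.mpr (by rw [hjs0]; exact hzlmne)
    have hlmj : lm K X j = s0 := by
      apply lm_eq_of K X hs0supp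
      intro s hs
      have : z.coeff (u0 * s) ≠ 0 := by rw [← piL_apply K X u0 z s]; exact Finsupp.mem_support_iff.mp hs
      have hmem : u0 * s ∈ z.coeff.support := Finsupp.mem_support_iff.mpr this
      have := le_lm K X hmem
      rw [hsplit] at this
      exact (fm_mul_le_mul_left X).mp this
    set ξ := wd K X u0 * j with hξ
    have hξeq : ξ.coeff = Finsupp.mapDomain (fun s => u0 * s) j.coeff := mulWd_eq K X u0 j
    have hξcoeff : ξ.coeff (lm K X z) = z.coeff (lm K X z) := by
      rw [hsplit, hξeq, Finsupp.mapDomain_apply (fm_mul_left_inj X u0), hjs0, ← hsplit]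
    have hξsupp : ∀ w ∈ ξ.coeff.support, ∃ s ∈ j.coeff.support, w = u0 * s := by
      classical
      intro w hw
      rw [hξeq] at hw
      obtain ⟨s, hs, rfl⟩ := Finset.mem_image.mp (Finsupp.mapDomain_support hw)
      exact ⟨s, hs, rfl⟩
    have hξle : ∀ w ∈ ξ.coeff.support, w ≤ lm K X z := by
      intro w hw
      obtain ⟨s, hs, rfl⟩ := hξsupp w hw
      rw [hsplit]
      exact (fm_mul_le_mul_left X).mpr (hlmj ▸ le_lm K X hs)
    have hξnf : ξ ∈ nfSub K X R d * Jspace K X N R (n + 1) := by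
      apply Submodule.mul_mem_mul _ hj
      exact Submodule.subset_span ⟨u0, hu0len, noFac_normal K X hNP, rfl⟩
    have hξdegJ : ξ ∈ degSub K X d * Jspace K X N R (n + 1) :=
      Submodule.mul_mem_mul (hu0len ▸ wd_mem_degSub K X u0) hj
    set z' := z - ξ with hz'def
    have hz' : z' ∈ degSub K X d * Jspace K X N R (n + 1) := Submodule.sub_mem _ hz hξdegJ
    have hz'supp_lt : ∀ w ∈ z'.coeff.support, w < lm K X z := by
      intro w hw
      have hne : w ≠ lm K X z := by
        intro he
        have : z'.coeff (lm K X z) = 0 := by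
          rw [hz'def, MonoidAlgebra.coeff_sub, Finsupp.sub_apply, hξcoeff, sub_self]
        rw [he] at hw
        exact Finsupp.mem_support_iff.mp hw this
      rcases Finset.mem_union.mp (Finsupp.support_sub hw) with h | h
      · exact lt_of_le_of_ne (le_lm K X h) hne
      · exact lt_of_le_of_ne (hξle w h) hne
    have hz'G : ∀ w ∈ z'.coeff.support,
        noFac K X R (FreeMonoid.ofList ((FreeMonoid.toList w).take d)) ∨
          T2 (wd K X w) = wd K X w := by
      intro w hw
      rcases Finset.mem_union.mp (Finsupp.support_sub hw) with h | h
      · exact hsupp w h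
      · obtain ⟨s, _, rfl⟩ := hξsupp w h
        left
        have htake : (FreeMonoid.toList (u0 * s)).take d = FreeMonoid.toList u0 := by
          rw [FreeMonoid.toList_mul]
          have hu0len' : (FreeMonoid.toList u0).length = d := hu0len
          rw [← hu0len', List.take_left]
        rw [htake, FreeMonoid.ofList_toList]
        exact hNP
    have hle : msrS K X m z ≤ c := Nat.lt_succ_iff.mp hlt
    have hmsr : msrS K X m z' < c := lt_of_lt_of_le (msrS_lt K X hdegm h0 hz'supp_lt) hle
    have hz'mem := ih z' hz' hz'G hmsr
    have hzz : z = z' + ξ := by rw [hz'def]; abel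
    rw [hzz]
    exact Submodule.add_mem _ hz'mem hξnf

lemma pow_deg {m : ℕ} {T1 T2 : F K X →ₗ[K] F K X} (hT1 : IsRedOp K X m T1)
    (hT2 : IsRedOp K X m T2) :
    ∀ (j : ℕ) {x : F K X}, x ∈ degSub K X m → ((T2 * T1) ^ j) x ∈ degSub K X m := by
  intro j
  induction j with
  | zero => intro x hx; rw [pow_zero]; exact hx
  | succ j ih =>
      intro x hx
      rw [pow_succ, Module.End.mul_apply, Module.End.mul_apply]
      exact ih (redop_map_deg K X hT2 (redop_map_deg K X hT1 hx))

end CC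
open CC in
/-- Suppose the reduced `N`-homogeneous presentation `⟨X|R⟩` is
side-confluent.  Let `n ≥ 0`, `m ≥ l_N(n)`, let `(T1, T2) = (F_1^{n,m}, F_2^{n,m})` be the
reduction pair of bi-degree `(n,m)`, let `k ≥ 1` satisfy `⟨T1,T2⟩^k = ⟨T2,T1⟩^k`, and set
`Γ^{n,m} = (id − T2)·Σ_{i odd, 1 ≤ i ≤ k−1} ⟨T2,T1⟩^i`.  If `m ≥ l_N(n+1)`, then the image
of `Γ^{n,m}` (on `V^{⊗m}`) is contained in `φ(V^{⊗m−l_N(n+1)}) ⊗ J_{n+1}` — the span of the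
elements `w·f` with `w` a normal word of length `m−l_N(n+1)` and `f ∈ J_{n+1}`; if
`m < l_N(n+1)`, then `Γ^{n,m} = 0`. -/
theorem stmt16 (K : Type*) [Field K] (X : Type*) [Fintype X] [LinearOrder X]
    (N : ℕ) (hN : 2 ≤ N) (R : Set (F K X))
    (hhom : NHomogLC1 K X N R) (hred : Reduced K X R)
    (hside : SideConfluent K X N R)
    (n m : ℕ) (hnm : lN N n ≤ m)
    (T1 T2 : F K X →ₗ[K] F K X)
    (hT1 : IsRedOp K X m T1) (hkT1 : LinearMap.ker T1 = ker1 K X N R n m)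
    (hT2 : IsRedOp K X m T2) (hkT2 : LinearMap.ker T2 = ker2 K X N R n m)
    (k : ℕ) (hk : 1 ≤ k) (hconf : altProd T1 T2 k = altProd T2 T1 k) :
    (lN N (n + 1) ≤ m →
      ∀ f ∈ degSub K X m,
        Gamma K X T1 T2 k f ∈ nfSub K X R (m - lN N (n + 1)) * Jspace K X N R (n + 1)) ∧
    (m < lN N (n + 1) → Gamma K X T1 T2 k = 0) := by
  constructor
  · intro hm f hf
    set d := m - lN N (n + 1) with hd
    have hkT2' : LinearMap.ker T2 = degSub K X d * Jspace K X N R (n + 1) := by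
      rw [hkT2, ker2, if_neg (not_lt.mpr hm)]
    have hexp : Gamma K X T1 T2 k f =
        ∑ i ∈ (Finset.Icc 1 (k - 1)).filter (fun i => Odd i),
          (1 - T2) (altProd T2 T1 i f) := by
      rw [Gamma, Module.End.mul_apply, LinearMap.sum_apply, map_sum]
    rw [hexp]
    apply Submodule.sum_mem
    intro i hi
    have ho : Odd i := (Finset.mem_filter.mp hi).2
    have haP : altProd T2 T1 i f = T1 (((T2 * T1) ^ (i / 2)) f) := by
      rw [altProd, if_neg (Nat.not_even_iff_odd.mpr ho), Module.End.mul_apply]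
    rw [haP]
    set x := ((T2 * T1) ^ (i / 2)) f with hx
    have hxdeg : x ∈ degSub K X m := pow_deg K X hT1 hT2 (i / 2) hf
    set y := T1 x with hy
    have hyfix := redop_fix_span K X hT1 hxdeg
    have hydeg : y ∈ degSub K X m := redop_map_deg K X hT1 hxdeg
    have hysuppNF : ∀ w ∈ y.coeff.support,
        noFac K X R (FreeMonoid.ofList ((FreeMonoid.toList w).take d)) := by
      intro w hw
      have hwlen : wlen X w = m := (hyfix w hw).1
      have hwfix : T1 (wd K X w) = wd K X w := (hyfix w hw).2
      have hNF1 : noFac K X R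
          (FreeMonoid.ofList ((FreeMonoid.toList w).take (m - lN N n))) := by
        by_contra hc
        obtain ⟨h, hker, hne, hlmh, hdegh⟩ := factor_mem_ker1 K X hhom hnm hwlen hc
        have hTh : T1 h = 0 := by
          rw [← LinearMap.mem_ker, hkT1]; exact hker
        have := redop_lm_not_fix K X hT1 hTh hne hdegh
        rw [hlmh] at this
        exact this hwfix
      have hdle : d ≤ m - lN N n := by
        have := lN_le_succ hN n
        omega
      exact noFac_take K X hdle hNF1
    have hterm : (1 - T2) (T1 (((T2 * T1) ^ (i / 2)) f)) = y - T2 y := by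
      rw [LinearMap.sub_apply, Module.End.one_apply]
    rw [hterm]
    have htker : T2 (y - T2 y) = 0 := by
      rw [map_sub, redop_idem K X hT2, sub_self]
    have htmem : y - T2 y ∈ degSub K X d * Jspace K X N R (n + 1) := by
      rw [← hkT2']; exact LinearMap.mem_ker.mpr htker
    have htG : ∀ w ∈ (y - T2 y).coeff.support,
        noFac K X R (FreeMonoid.ofList ((FreeMonoid.toList w).take d)) ∨
          T2 (wd K X w) = wd K X w := by
      intro w hw
      rcases Finset.mem_union.mp (Finsupp.support_sub hw) with h | h
      · exact Or.inl (hysuppNF w h)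
      · exact Or.inr ((redop_fix_span K X hT2 hydeg w h).2)
    exact key_step K X hN hhom hm hT2 hkT2' (msrS K X m (y - T2 y) + 1) (y - T2 y)
      htmem htG (Nat.lt_succ_self _)
  · intro hlt
    have hk2 : LinearMap.ker T2 = ⊥ := by
      rw [hkT2, ker2, if_pos hlt]
    have hT2id : T2 = 1 := by
      apply LinearMap.ext
      intro x
      have h1 : T2 (T2 x - x) = 0 := by
        rw [map_sub, redop_idem K X hT2, sub_self]
      have h2 : T2 x - x ∈ LinearMap.ker T2 := LinearMap.mem_ker.mpr h1
      rw [hk2, Submodule.mem_bot, sub_eq_zero] at h2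
      rw [Module.End.one_apply, h2]
    rw [Gamma, hT2id, sub_self, zero_mul]
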